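/- Every N-type operator S (an invertible 2×2 complex matrix with ‖S e₀‖ = ‖S e₁‖) is either proportional to a unitary matrix, or can be written S = U·D·H·Rz(γ) where U is unitary, D = κ·diag(cos θ, sin θ) with κ > 0, 0 < θ < π/2, θ ≠ π/4, and γ ∈ [0, 2π). -/

import Mathlib

open Matrix

noncomputable section

/-- z-rotation matrix Rz(ξ) = diag(e^{−iξ/2}, e^{iξ/2}). -/
def Rz (ξ : ℂ) : Matrix (Fin 2) (Fin 2) ℂ :=
  !![Complex.exp (-Complex.I * ξ / 2), 0; 0, Complex.exp (Complex.I * ξ / 2)]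

/-- The Hadamard matrix. -/
def Hm : Matrix (Fin 2) (Fin 2) ℂ := ((Real.sqrt 2 : ℂ))⁻¹ • !![1, 1; 1, -1]

lemma ThT (κ θ γ : ℝ) :
    ((((κ:ℂ) • !![(Real.cos θ:ℂ),0;0,(Real.sin θ:ℂ)]) * Hm * Rz (γ:ℂ))ᴴ *
      (((κ:ℂ) • !![(Real.cos θ:ℂ),0;0,(Real.sin θ:ℂ)]) * Hm * Rz (γ:ℂ))) =
    !![((κ:ℂ)^2/2), ((κ:ℂ)^2/2) * Real.cos (2*θ) * Complex.exp ((γ:ℂ)*Complex.I);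
       ((κ:ℂ)^2/2) * Real.cos (2*θ) * Complex.exp (-(γ:ℂ)*Complex.I), ((κ:ℂ)^2/2)] := by
  have h2i : (((Real.sqrt 2 : ℝ)) : ℂ)⁻¹ * (((Real.sqrt 2 : ℝ)) : ℂ)⁻¹ = 1/2 := by
    rw [← mul_inv, ← Complex.ofReal_mul, Real.mul_self_sqrt (by norm_num : (0:ℝ) ≤ 2)]
    norm_num
  have hcs : Complex.cos (θ:ℂ)^2 + Complex.sin (θ:ℂ)^2 = 1 := Complex.cos_sq_add_sin_sq _
  have hcos2 : Complex.cos (2*(θ:ℂ)) = Complex.cos (θ:ℂ)^2 - Complex.sin (θ:ℂ)^2 := by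
    rw [Complex.cos_two_mul]; linear_combination hcs
  have hcc : (starRingEnd ℂ) (Complex.cos (θ:ℂ)) = Complex.cos (θ:ℂ) := by
    rw [← Complex.ofReal_cos]; exact Complex.conj_ofReal _
  have hss : (starRingEnd ℂ) (Complex.sin (θ:ℂ)) = Complex.sin (θ:ℂ) := by
    rw [← Complex.ofReal_sin]; exact Complex.conj_ofReal _
  have hca : (starRingEnd ℂ) (Complex.exp (-(Complex.I * (γ:ℂ)) / 2))
      = Complex.exp (Complex.I * (γ:ℂ) / 2) := by
    rw [← Complex.exp_conj]; congr 1
    simp [map_div₀, Complex.conj_ofReal, map_ofNat]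
  have hcb : (starRingEnd ℂ) (Complex.exp (Complex.I * (γ:ℂ) / 2))
      = Complex.exp (-(Complex.I * (γ:ℂ)) / 2) := by
    rw [← Complex.exp_conj]; congr 1
    simp [map_div₀, Complex.conj_ofReal, map_ofNat]
  have hab : Complex.exp (-(Complex.I * (γ:ℂ)) / 2) * Complex.exp (Complex.I * (γ:ℂ) / 2) = 1 := by
    rw [← Complex.exp_add, show -(Complex.I * (γ:ℂ)) / 2 + Complex.I * (γ:ℂ) / 2 = 0 by ring,
      Complex.exp_zero]
  have hbb : Complex.exp (Complex.I * (γ:ℂ) / 2) * Complex.exp (Complex.I * (γ:ℂ) / 2)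
      = Complex.exp ((γ:ℂ) * Complex.I) := by
    rw [← Complex.exp_add]; ring_nf
  have haa : Complex.exp (-(Complex.I * (γ:ℂ)) / 2) * Complex.exp (-(Complex.I * (γ:ℂ)) / 2)
      = Complex.exp (-((γ:ℂ) * Complex.I)) := by
    rw [← Complex.exp_add]; ring_nf
  set a := Complex.exp (-(Complex.I * (γ:ℂ)) / 2) with ha
  set b := Complex.exp (Complex.I * (γ:ℂ) / 2) with hb
  ext i j
  fin_cases i <;> fin_cases j <;>
    simp only [Fin.zero_eta, Fin.mk_one, Fin.isValue] <;>
    simp [Hm, Rz, Matrix.mul_apply, Fin.sum_univ_two, Complex.conj_ofReal,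
      Matrix.smul_apply, hca, hcb, hcc, hss, ← ha, ← hb]
  · linear_combination (κ:ℂ)^2*(Complex.cos (θ:ℂ)^2+Complex.sin (θ:ℂ)^2)*(b*a)*h2i
      + (κ:ℂ)^2/2*(Complex.cos (θ:ℂ)^2+Complex.sin (θ:ℂ)^2)*hab + (κ:ℂ)^2/2*hcs
  · linear_combination (κ:ℂ)^2*(Complex.cos (θ:ℂ)^2-Complex.sin (θ:ℂ)^2)*(b*b)*h2i
      + (κ:ℂ)^2/2*(Complex.cos (θ:ℂ)^2-Complex.sin (θ:ℂ)^2)*hbb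
      - (κ:ℂ)^2/2*Complex.exp ((γ:ℂ)*Complex.I)*hcos2
  · linear_combination (κ:ℂ)^2*(Complex.cos (θ:ℂ)^2-Complex.sin (θ:ℂ)^2)*(a*a)*h2i
      + (κ:ℂ)^2/2*(Complex.cos (θ:ℂ)^2-Complex.sin (θ:ℂ)^2)*haa
      - (κ:ℂ)^2/2*Complex.exp (-((γ:ℂ)*Complex.I))*hcos2
  · linear_combination (κ:ℂ)^2*(Complex.cos (θ:ℂ)^2+Complex.sin (θ:ℂ)^2)*(a*b)*h2i
      + (κ:ℂ)^2/2*(Complex.cos (θ:ℂ)^2+Complex.sin (θ:ℂ)^2)*hab + (κ:ℂ)^2/2*hcs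

/-- Every N-type operator S (invertible with ⟨0|S†S|0⟩ = ⟨1|S†S|1⟩, i.e. ‖Se₀‖ = ‖Se₁‖)
is either proportional to a unitary, or S = U·D·H·Rz(γ) with U unitary,
D = κ·diag(cos θ, sin θ), κ > 0, 0 < θ < π/2, θ ≠ π/4, γ ∈ [0, 2π). -/
theorem ntype_characterization (S : Matrix (Fin 2) (Fin 2) ℂ) (hS : IsUnit S)
    (hN : (Sᴴ * S) 0 0 = (Sᴴ * S) 1 1) :
    (∃ (c : ℂ) (U : Matrix (Fin 2) (Fin 2) ℂ), c ≠ 0 ∧ Uᴴ * U = 1 ∧ S = c • U) ∨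
      (∃ (U : Matrix (Fin 2) (Fin 2) ℂ) (κ θ γ : ℝ),
        Uᴴ * U = 1 ∧ 0 < κ ∧ 0 < θ ∧ θ < Real.pi / 2 ∧ θ ≠ Real.pi / 4 ∧
          0 ≤ γ ∧ γ < 2 * Real.pi ∧
          S = U * ((κ : ℂ) • !![(Real.cos θ : ℂ), 0; 0, (Real.sin θ : ℂ)]) * Hm *
            Rz (γ : ℂ)) := by
  have hdet : S.det ≠ 0 := by
    intro h
    have := (Matrix.isUnit_iff_isUnit_det S).mp hS
    rw [h] at this
    exact (not_isUnit_zero this)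
  set p : ℝ := Complex.normSq (S 0 0) + Complex.normSq (S 1 0) with hpdef
  have hM00 : (Sᴴ * S) 0 0 = (p : ℂ) := by
    simp [Matrix.mul_apply, Fin.sum_univ_two, Matrix.conjTranspose_apply, hpdef,
      ← Complex.normSq_eq_conj_mul_self]
  have hp0 : 0 < p := by
    rcases lt_or_eq_of_le (add_nonneg (Complex.normSq_nonneg (S 0 0))
      (Complex.normSq_nonneg (S 1 0))) with h | h
    · exact h
    · exfalso
      have h1 : S 0 0 = 0 := by
        have := Complex.normSq_nonneg (S 0 0)
        have := Complex.normSq_nonneg (S 1 0)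
        have : Complex.normSq (S 0 0) = 0 := by nlinarith
        exact Complex.normSq_eq_zero.mp this
      have h2 : S 1 0 = 0 := by
        have := Complex.normSq_nonneg (S 0 0)
        have := Complex.normSq_nonneg (S 1 0)
        have : Complex.normSq (S 1 0) = 0 := by nlinarith
        exact Complex.normSq_eq_zero.mp this
      apply hdet
      rw [Matrix.det_fin_two, h1, h2]
      ring
  set z : ℂ := (Sᴴ * S) 0 1 with hzdef
  have h10 : (Sᴴ * S) 1 0 = (starRingEnd ℂ) z := by
    simp [hzdef, Matrix.mul_apply, Fin.sum_univ_two, Matrix.conjTranspose_apply]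
    ring
  have hdetM : (p : ℂ) * (p : ℂ) - z * (starRingEnd ℂ) z = (Complex.normSq S.det : ℂ) := by
    have h1 : (Sᴴ * S).det = (starRingEnd ℂ) S.det * S.det := by
      rw [Matrix.det_mul, Matrix.det_conjTranspose]; rfl
    rw [Matrix.det_fin_two, hM00, ← hN, hM00, h10, ← hzdef] at h1
    rw [h1, ← Complex.normSq_eq_conj_mul_self]
  have hnsq : Complex.normSq z < p ^ 2 := by
    have h1 : (p : ℂ) * (p : ℂ) - (Complex.normSq z : ℂ) = (Complex.normSq S.det : ℂ) := by
      rw [← hdetM, Complex.mul_conj]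
    have h2 : p * p - Complex.normSq z = Complex.normSq S.det := by
      exact_mod_cast h1
    have h3 : 0 < Complex.normSq S.det := Complex.normSq_pos.mpr hdet
    nlinarith
  by_cases hz : z = 0
  · -- proportional to unitary
    left
    refine ⟨(Real.sqrt p : ℂ), ((Real.sqrt p : ℂ))⁻¹ • S, ?_, ?_, ?_⟩
    · simpa using (Real.sqrt_ne_zero'.mpr hp0)
    · have hcne : ((Real.sqrt p : ℝ) : ℂ) ≠ 0 := by
        simpa using (Real.sqrt_ne_zero'.mpr hp0)
      have hMeq : Sᴴ * S = (p : ℂ) • 1 := by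
        ext i j
        fin_cases i <;> fin_cases j
        · simpa using hM00
        · simpa using hz
        · simp only [Fin.mk_one, Fin.zero_eta]
          rw [h10, hz]
          simp
        · simp only [Fin.mk_one]
          rw [← hN, hM00]
          simp
      rw [Matrix.conjTranspose_smul, Matrix.smul_mul, Matrix.mul_smul, hMeq,
        smul_smul, smul_smul]
      have : star ((Real.sqrt p : ℝ) : ℂ)⁻¹ * ((Real.sqrt p : ℝ) : ℂ)⁻¹ * (p:ℂ) = 1 := by
        rw [Complex.star_def, map_inv₀, Complex.conj_ofReal]
        have hsq : ((Real.sqrt p : ℝ) : ℂ) * ((Real.sqrt p : ℝ) : ℂ) = (p : ℂ) := by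
          rw [← Complex.ofReal_mul, Real.mul_self_sqrt hp0.le]
        field_simp
        linear_combination -hsq
      rw [this, one_smul]
    · rw [smul_smul]
      have hcne : ((Real.sqrt p : ℝ) : ℂ) ≠ 0 := by
        simpa using (Real.sqrt_ne_zero'.mpr hp0)
      rw [mul_inv_cancel₀ hcne, one_smul]
  · -- D H Rz form
    right
    set r : ℝ := ‖z‖ with hrdef
    have hr0 : 0 < r := by
      rw [hrdef]; exact norm_pos_iff.mpr hz
    have hrp : r < p := by
      have h1 : r^2 < p^2 := by rw [hrdef, Complex.sq_norm]; exact hnsq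
      nlinarith
    set κ := Real.sqrt (2*p) with hκdef
    have hκ0 : 0 < κ := Real.sqrt_pos.mpr (by linarith)
    have hκ2 : ((κ:ℝ):ℂ)^2 / 2 = (p:ℂ) := by
      have : (κ:ℝ)^2 = 2*p := Real.sq_sqrt (by linarith)
      rw [← Complex.ofReal_pow, this]
      push_cast; ring
    set θ := Real.arccos (r/p) / 2 with hθdef
    have hx0 : 0 < r/p := div_pos hr0 hp0
    have hx1 : r/p < 1 := (div_lt_one hp0).mpr hrp
    have hθpos : 0 < θ := by
      rw [hθdef]
      have := Real.arccos_pos.mpr hx1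
      linarith
    have hθlt4 : θ < Real.pi/4 := by
      rw [hθdef]
      have := Real.arccos_lt_pi_div_two.mpr hx0
      linarith
    have hθlt2 : θ < Real.pi/2 := by
      have := Real.pi_pos
      linarith
    have hcos2θ : Real.cos (2*θ) = r/p := by
      rw [hθdef, mul_div_cancel₀ _ (two_ne_zero)]
      exact Real.cos_arccos (by linarith) (by linarith)
    set φ := Complex.arg z with hφdef
    set γ := if 0 ≤ φ then φ else φ + 2*Real.pi with hγdef
    have hφpi : φ ≤ Real.pi := Complex.arg_le_pi z
    have hφnpi : -Real.pi < φ := Complex.neg_pi_lt_arg z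
    have hpi := Real.pi_pos
    have hγ0 : 0 ≤ γ := by
      rw [hγdef]; split
      · assumption
      · linarith
    have hγlt : γ < 2*Real.pi := by
      rw [hγdef]; split
      · linarith
      · linarith [not_le.mp (by assumption : ¬ 0 ≤ φ)]
    have hexpp : Complex.exp ((γ:ℝ)*Complex.I) = Complex.exp ((φ:ℝ)*Complex.I) := by
      rw [hγdef]; split
      · rfl
      · push_cast
        rw [add_mul, Complex.exp_add]
        have : ((2:ℂ)*(Real.pi:ℂ))*Complex.I = 2*Real.pi*Complex.I := by push_cast; ring
        rw [this, Complex.exp_two_pi_mul_I, mul_one]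
    have hexpm : Complex.exp (-(γ:ℝ)*Complex.I) = Complex.exp (-(φ:ℝ)*Complex.I) := by
      have h1 : ∀ x : ℝ, Complex.exp (-(x:ℝ)*Complex.I) = (Complex.exp ((x:ℝ)*Complex.I))⁻¹ := by
        intro x
        rw [← Complex.exp_neg]
        ring_nf
      rw [h1, h1, hexpp]
    have hzexp : (r:ℂ) * Complex.exp ((φ:ℝ)*Complex.I) = z := by
      rw [hrdef, hφdef]
      exact Complex.norm_mul_exp_arg_mul_I z
    have hzbar : (r:ℂ) * Complex.exp (-(φ:ℝ)*Complex.I) = (starRingEnd ℂ) z := by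
      conv_rhs => rw [← hzexp]
      rw [_root_.map_mul, Complex.conj_ofReal, ← Complex.exp_conj]
      congr 1
      rw [_root_.map_mul, Complex.conj_ofReal, Complex.conj_I]
      ring
    have hrdiv : ((κ:ℝ):ℂ)^2/2 * ((Real.cos (2*θ) : ℝ) : ℂ) = (r:ℂ) := by
      have hpne : (p:ℂ) ≠ 0 := by
        simpa using hp0.ne'
      rw [hκ2, hcos2θ]
      push_cast
      field_simp
    -- the matrix identity : Sᴴ * S equals the ThT right-hand side
    have hMeq : Sᴴ * S =
        !![(((κ:ℝ):ℂ)^2/2), (((κ:ℝ):ℂ)^2/2) * Real.cos (2*θ) * Complex.exp ((γ:ℝ)*Complex.I);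
           (((κ:ℝ):ℂ)^2/2) * Real.cos (2*θ) * Complex.exp (-(γ:ℝ)*Complex.I), (((κ:ℝ):ℂ)^2/2)] := by
      ext i j
      fin_cases i <;> fin_cases j
      · simpa [hκ2] using hM00
      · show z = _
        rw [hexpp, ← hzexp]
        rw [show (((κ:ℝ):ℂ)^2/2) * ((Real.cos (2*θ):ℝ):ℂ) * Complex.exp ((φ:ℝ)*Complex.I)
            = (((κ:ℝ):ℂ)^2/2 * ((Real.cos (2*θ):ℝ):ℂ)) * Complex.exp ((φ:ℝ)*Complex.I) by ring,
          hrdiv]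
        simp
      · show (Sᴴ * S) 1 0 = _
        rw [h10, hexpm, ← hzbar]
        rw [show (((κ:ℝ):ℂ)^2/2) * ((Real.cos (2*θ):ℝ):ℂ) * Complex.exp (-(φ:ℝ)*Complex.I)
            = (((κ:ℝ):ℂ)^2/2 * ((Real.cos (2*θ):ℝ):ℂ)) * Complex.exp (-(φ:ℝ)*Complex.I) by ring,
          hrdiv]
        simp [hexpm]
      · show (Sᴴ * S) 1 1 = _
        rw [← hN, hM00, hκ2]
        simp
    have hTT : ((((κ:ℂ) • !![(Real.cos θ:ℂ),0;0,(Real.sin θ:ℂ)]) * Hm * Rz (γ:ℂ))ᴴ *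
        (((κ:ℂ) • !![(Real.cos θ:ℂ),0;0,(Real.sin θ:ℂ)]) * Hm * Rz (γ:ℂ))) = Sᴴ * S := by
      rw [ThT κ θ γ, hMeq]
    set T := ((κ:ℂ) • !![(Real.cos θ:ℂ),0;0,(Real.sin θ:ℂ)]) * Hm * Rz (γ:ℂ) with hTdef
    have hcosθ : 0 < Real.cos θ := Real.cos_pos_of_mem_Ioo ⟨by linarith, hθlt2⟩
    have hsinθ : 0 < Real.sin θ := Real.sin_pos_of_pos_of_lt_pi hθpos (by linarith)
    have hdetT : IsUnit T.det := by
      rw [hTdef, Matrix.det_mul, Matrix.det_mul]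
      have h1 : ((κ:ℂ) • !![(Real.cos θ:ℂ),0;0,(Real.sin θ:ℂ)]).det
          = (κ:ℂ)^2 * ((Real.cos θ:ℂ) * (Real.sin θ:ℂ)) := by
        rw [Matrix.det_smul, Matrix.det_fin_two_of, Fintype.card_fin]
        simp
      have h2 : Hm.det = -1 := by
        rw [Hm, Matrix.det_smul, Matrix.det_fin_two_of]
        have h2i : (((Real.sqrt 2 : ℝ)) : ℂ)⁻¹ ^ 2 = 1/2 := by
          rw [sq, ← mul_inv, ← Complex.ofReal_mul, Real.mul_self_sqrt (by norm_num : (0:ℝ) ≤ 2)]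
          norm_num
        rw [Fintype.card_fin, h2i]
        ring
      have h3 : (Rz (γ:ℂ)).det = 1 := by
        rw [Rz, Matrix.det_fin_two_of, mul_zero, sub_zero, ← Complex.exp_add,
          show -Complex.I * (γ:ℂ) / 2 + Complex.I * (γ:ℂ) / 2 = 0 by ring, Complex.exp_zero]
      rw [h1, h2, h3]
      apply isUnit_iff_ne_zero.mpr
      have hκne : ((κ:ℝ):ℂ) ≠ 0 := Complex.ofReal_ne_zero.mpr hκ0.ne'
      have hcne : ((Real.cos θ : ℝ):ℂ) ≠ 0 := Complex.ofReal_ne_zero.mpr hcosθ.ne'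
      have hsne : ((Real.sin θ : ℝ):ℂ) ≠ 0 := Complex.ofReal_ne_zero.mpr hsinθ.ne'
      simp [hκne, hcne, hsne, pow_ne_zero_iff]
      constructor
      · rw [← Complex.ofReal_cos]; exact Complex.ofReal_ne_zero.mpr hcosθ.ne'
      · rw [← Complex.ofReal_sin]; exact Complex.ofReal_ne_zero.mpr hsinθ.ne'
    have hdetTH : IsUnit (Tᴴ).det := by
      rw [Matrix.det_conjTranspose]
      exact hdetT.star
    refine ⟨S * T⁻¹, κ, θ, γ, ?_, hκ0, hθpos, hθlt2, by linarith, hγ0, hγlt, ?_⟩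
    · rw [Matrix.conjTranspose_mul, Matrix.conjTranspose_nonsing_inv]
      calc (Tᴴ)⁻¹ * Sᴴ * (S * T⁻¹) = (Tᴴ)⁻¹ * (Sᴴ * S) * T⁻¹ := by
            simp only [Matrix.mul_assoc]
        _ = (Tᴴ)⁻¹ * (Tᴴ * T) * T⁻¹ := by rw [hTT]
        _ = ((Tᴴ)⁻¹ * Tᴴ) * (T * T⁻¹) := by
            simp only [Matrix.mul_assoc]
        _ = 1 := by
            rw [Matrix.nonsing_inv_mul _ hdetTH, Matrix.mul_nonsing_inv _ hdetT, Matrix.mul_one]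
    · have : S * T⁻¹ * T = S := by
        rw [Matrix.mul_assoc, Matrix.nonsing_inv_mul _ hdetT, Matrix.mul_one]
      rw [Matrix.mul_assoc, Matrix.mul_assoc, ← Matrix.mul_assoc ((κ:ℂ) • _), ← hTdef, this]

end
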